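/- Define F(m, j) = C(m, j)² + 2·∑_{k=1}^{j} (-1)^k · C(m, j-k) · C(m, j+k). Then for all natural numbers m ≥ 1 and j, F(m, j) = C(m, j). -/

import Mathlib

open Polynomial Finset

lemma expandA (m : ℕ) : (1 - X : ℤ[X])^m = ∑ i ∈ range (m+1), Polynomial.C ((-1:ℤ)^i * m.choose i) * X^i := by
  rw [sub_eq_add_neg, add_comm, add_pow]
  refine Finset.sum_congr rfl fun i _ => ?_
  rw [one_pow, mul_one, neg_pow, map_mul, map_pow, map_neg, map_one, map_natCast]
  ring

lemma coeffA (m k : ℕ) : ((1 - X : ℤ[X])^m).coeff k = (-1)^k * m.choose k := by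
  rw [expandA, finset_sum_coeff]
  simp only [coeff_C_mul, coeff_X_pow, mul_ite, mul_one, mul_zero]
  rw [Finset.sum_ite_eq (range (m+1))]
  split_ifs with hk
  · rfl
  · simp only [Finset.mem_range, not_lt] at hk
    simp [Nat.choose_eq_zero_of_lt hk]

lemma expandB (m : ℕ) : (1 - X^2 : ℤ[X])^m = ∑ i ∈ range (m+1), Polynomial.C ((-1:ℤ)^i * m.choose i) * X^(2*i) := by
  rw [sub_eq_add_neg, add_comm, add_pow]
  refine Finset.sum_congr rfl fun i _ => ?_
  rw [one_pow, mul_one, neg_pow, map_mul, map_pow, map_neg, map_one, map_natCast, pow_mul]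
  ring

lemma coeffB (m j : ℕ) : ((1 - X^2 : ℤ[X])^m).coeff (2*j) = (-1)^j * m.choose j := by
  rw [expandB, finset_sum_coeff]
  simp only [coeff_C_mul, coeff_X_pow, mul_ite, mul_one, mul_zero]
  have h2 : ∀ i, (2*j = 2*i) ↔ (j = i) := by omega
  simp only [h2]
  rw [Finset.sum_ite_eq (range (m+1))]
  split_ifs with hk
  · rfl
  · simp only [Finset.mem_range, not_lt] at hk
    simp [Nat.choose_eq_zero_of_lt hk]

lemma keyS (m j : ℕ) :
    ∑ i ∈ range (2*j+1), (m.choose i : ℤ) * ((-1)^(2*j-i) * m.choose (2*j-i)) = (-1)^j * m.choose j := by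
  have hmul : ((1 + X : ℤ[X]))^m * (1 - X)^m = (1 - X^2)^m := by
    rw [← mul_pow]; ring_nf
  have h := congrArg (fun p => p.coeff (2*j)) hmul
  simp only [coeff_mul, coeffB] at h
  rw [Finset.Nat.sum_antidiagonal_eq_sum_range_succ (fun a b => ((1+X:ℤ[X])^m).coeff a * ((1-X:ℤ[X])^m).coeff b)] at h
  simpa [coeff_one_add_X_pow, coeffA] using h

lemma signEq (j k : ℕ) (h : k ≤ j) : (-1:ℤ)^(j-k) = (-1)^(j+k) := by
  have h2 : j + k = (j - k) + 2*k := by omega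
  rw [h2, pow_add, pow_mul]; simp

theorem stmt_4 (m j : ℕ) (hm : 1 ≤ m) :
    ((m.choose j : ℤ)) ^ 2 +
      2 * ∑ k ∈ Finset.Icc 1 j,
        (-1 : ℤ) ^ k * (m.choose (j - k)) * (m.choose (j + k)) =
    (m.choose j : ℤ) := by
  have hS := keyS m j
  set f : ℕ → ℤ := fun i => (m.choose i : ℤ) * ((-1:ℤ)^(2*j-i) * m.choose (2*j-i)) with hf
  have h1 : ∑ i ∈ Ico (j+1) (2*j+1), f i = ∑ i ∈ range j, f (j+1+i) := by
    rw [Finset.sum_Ico_eq_sum_range]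
    have e : 2*j+1 - (j+1) = j := by omega
    rw [e]
  have hsplit : ∑ i ∈ range (2*j+1), f i
      = ((∑ i ∈ range j, f i) + f j) + ∑ i ∈ range j, f (j+1+i) := by
    rw [← Finset.sum_range_succ, ← h1, range_eq_Ico, range_eq_Ico]
    exact (Finset.sum_Ico_consecutive f (m := 0) (n := j+1) (k := 2*j+1) (by omega) (by omega)).symm
  have hA : ∑ i ∈ range j, f i = ∑ i ∈ range j, f (j - 1 - i) :=
    (Finset.sum_range_reflect f j).symm
  have hA' : ∑ i ∈ range j, f (j - 1 - i)
      = ∑ i ∈ range j, (-1:ℤ)^j * ((-1:ℤ)^(i+1) * (m.choose (j-(i+1))) * (m.choose (j+(i+1)))) := by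
    refine Finset.sum_congr rfl fun i hi => ?_
    rw [Finset.mem_range] at hi
    have e1 : j - 1 - i = j - (i+1) := by omega
    have e2 : 2*j - (j - (i+1)) = j + (i+1) := by omega
    rw [hf]
    simp only [e1, e2]
    rw [pow_add]
    ring
  have hB : ∑ i ∈ range j, f (j+1+i)
      = ∑ i ∈ range j, (-1:ℤ)^j * ((-1:ℤ)^(i+1) * (m.choose (j-(i+1))) * (m.choose (j+(i+1)))) := by
    refine Finset.sum_congr rfl fun i hi => ?_
    rw [Finset.mem_range] at hi
    have e3 : j + 1 + i = j + (i+1) := by omega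
    have e2 : 2*j - (j + (i+1)) = j - (i+1) := by omega
    rw [hf]
    simp only [e3, e2]
    rw [signEq j (i+1) (by omega), pow_add]
    ring
  have hfj : f j = (-1:ℤ)^j * (m.choose j : ℤ)^2 := by
    rw [hf]
    have e : 2*j - j = j := by omega
    simp only [e]
    ring
  have hIcc : ∑ k ∈ Finset.Icc 1 j, (-1 : ℤ) ^ k * (m.choose (j - k)) * (m.choose (j + k))
      = ∑ i ∈ range j, (-1:ℤ)^(i+1) * (m.choose (j-(i+1))) * (m.choose (j+(i+1))) := by
    rw [← Finset.Ico_add_one_right_eq_Icc, Finset.sum_Ico_eq_sum_range]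
    have e : j + 1 - 1 = j := by omega
    rw [e]
    exact Finset.sum_congr rfl fun i _ => by rw [add_comm 1 i]
  rw [hsplit, hA, hA', hB, hfj, ← Finset.mul_sum] at hS
  rw [hIcc]
  refine mul_left_cancel₀ (a := (-1:ℤ)^j) (by simp [pow_ne_zero]) ?_
  linear_combination hS
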